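/- The sum of the series Σ_{m ≥ 1} φ(m)/(m²(m+1)) lies strictly between 0.7 and 0.9. -/
import Mathlib

open Finset

noncomputable def totf : ℕ → ℝ := fun m => (Nat.totient m : ℝ) / (m ^ 2 * (m + 1))

lemma totf_nonneg (m : ℕ) : 0 ≤ totf m := by
  unfold totf; positivity

lemma totf_le (m : ℕ) : totf m ≤ 1 / (m * (m + 1)) := by
  unfold totf
  rcases Nat.eq_zero_or_pos m with h | h
  · subst h; simp
  · have hm : (0:ℝ) < m := by exact_mod_cast h
    rw [div_le_div_iff₀ (by positivity) (by positivity)]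
    have ht : (Nat.totient m : ℝ) ≤ m := by exact_mod_cast Nat.totient_le m
    calc (Nat.totient m : ℝ) * (m * (m + 1)) ≤ m * (m * (m + 1)) := by
          apply mul_le_mul_of_nonneg_right ht; positivity
      _ = 1 * (m ^ 2 * (m + 1)) := by ring

lemma totf_summable : Summable totf := by
  apply Summable.of_nonneg_of_le totf_nonneg (fun m => (totf_le m).trans ?_)
    ((Real.summable_one_div_nat_pow (p := 2)).mpr one_lt_two)
  rcases Nat.eq_zero_or_pos m with h | h
  · subst h; norm_num
  · have hm : (0:ℝ) < m := by exact_mod_cast h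
    rw [div_le_div_iff₀ (by positivity) (by positivity)]
    nlinarith

lemma tail_le : ∑' i : ℕ, totf (i + 16) ≤ 1 / 16 := by
  have hs : Summable (fun i : ℕ => totf (i + 16)) :=
    (summable_nat_add_iff (f := totf) 16).2 totf_summable
  apply Summable.tsum_le_of_sum_le hs
  intro u
  obtain ⟨n, hn⟩ := u.exists_nat_subset_range
  calc ∑ i ∈ u, totf (i + 16)
      ≤ ∑ i ∈ range n, totf (i + 16) := by
        exact Finset.sum_le_sum_of_subset_of_nonneg hn (fun i _ _ => totf_nonneg _)
    _ ≤ ∑ i ∈ range n, (1 / ((i:ℝ) + 16) - 1 / ((i + 1 : ℕ) + 16)) := by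
        apply Finset.sum_le_sum
        intro i _
        refine (totf_le (i + 16)).trans_eq ?_
        push_cast
        rw [div_sub_div _ _ (by positivity) (by positivity)]
        ring_nf
    _ = 1 / ((0:ℕ) + 16) - 1 / ((n:ℕ) + 16) := Finset.sum_range_sub' (fun i => 1 / ((i:ℝ) + 16)) n
    _ ≤ 1 / 16 := by
        have : (0:ℝ) ≤ 1 / ((n:ℕ) + 16) := by positivity
        norm_num
        linarith

lemma partial_val : ∑ i ∈ range 16, totf i > 0.7 ∧ ∑ i ∈ range 16, totf i + 1/16 < 0.9 := by
  have ht0 : Nat.totient 0 = 0 := by decide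
  have ht1 : Nat.totient 1 = 1 := by decide
  have ht2 : Nat.totient 2 = 1 := by decide
  have ht3 : Nat.totient 3 = 2 := by decide
  have ht4 : Nat.totient 4 = 2 := by decide
  have ht5 : Nat.totient 5 = 4 := by decide
  have ht6 : Nat.totient 6 = 2 := by decide
  have ht7 : Nat.totient 7 = 6 := by decide
  have ht8 : Nat.totient 8 = 4 := by decide
  have ht9 : Nat.totient 9 = 6 := by decide
  have ht10 : Nat.totient 10 = 4 := by decide
  have ht11 : Nat.totient 11 = 10 := by decide
  have ht12 : Nat.totient 12 = 4 := by decide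
  have ht13 : Nat.totient 13 = 12 := by decide
  have ht14 : Nat.totient 14 = 6 := by decide
  have ht15 : Nat.totient 15 = 8 := by decide
  simp only [Finset.sum_range_succ, Finset.sum_range_zero, totf, ht0, ht1, ht2, ht3, ht4, ht5,
    ht6, ht7, ht8, ht9, ht10, ht11, ht12, ht13, ht14, ht15]
  norm_num

theorem totient_series_between :
    0.7 < ∑' m : ℕ, (Nat.totient m : ℝ) / (m ^ 2 * (m + 1))
      ∧ ∑' m : ℕ, (Nat.totient m : ℝ) / (m ^ 2 * (m + 1)) < 0.9 := by
  have hf := totf_summable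
  have heq : ∑' m : ℕ, (Nat.totient m : ℝ) / (m ^ 2 * (m + 1)) = ∑' m, totf m := rfl
  have hsplit := Summable.sum_add_tsum_nat_add (f := totf) 16 hf
  obtain ⟨h1, h2⟩ := partial_val
  constructor
  · rw [heq]
    calc (0.7:ℝ) < ∑ i ∈ range 16, totf i := h1
      _ ≤ ∑' m, totf m := Summable.sum_le_tsum _ (fun i _ => totf_nonneg i) hf
  · rw [heq, ← hsplit]
    have := tail_le
    linarith
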